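/- Let R be a commutative ring and M an R-module such that the functor Q ↦ M ⊗_R Q is naturally isomorphic to a directed colimit of functors Q ↦ Hom_R(N_i, Q) where all transition natural transformations Hom_R(N_i, −) → Hom_R(N_j, −) are induced by surjections N_j → N_i of R-modules. Then M is a flat Mittag-Leffler module, i.e., M is flat and M ⊗_R ∏_k Q_k → ∏_k (M ⊗_R Q_k) is injective for every family (Q_k) of R-modules. -/

import Mathlib

universe u

open TensorProduct

/-- `M` is a Mittag-Leffler module: for every family of `R`-modules `(Q k)`, the canonical map
`M ⊗ (∏ k, Q k) → ∏ k, (M ⊗ Q k)` is injective. -/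
def IsMittagLeffler (R : Type u) [CommRing R]
    (M : Type u) [AddCommGroup M] [Module R M] : Prop :=
  ∀ (κ : Type u) (Q : κ → Type u) [∀ k, AddCommGroup (Q k)] [∀ k, Module R (Q k)],
    Function.Injective (TensorProduct.piRightHom R R M Q)

/-- If the functor `Q ↦ M ⊗ Q` is naturally isomorphic to a directed colimit of the functors
`Q ↦ Hom(N i, Q)`, where the transition natural transformations are induced by *surjections*
`N j → N i` of an inverse system, then `M` is a flat Mittag-Leffler module. -/
theorem flat_mittagLeffler_of_tensor_iso_colimit_hom_of_surjective
    (R : Type u) [CommRing R]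
    (M : Type u) [AddCommGroup M] [Module R M]
    (ι : Type u) [Preorder ι] [IsDirected ι (· ≤ ·)] [Nonempty ι]
    (N : ι → Type u) [∀ i, AddCommGroup (N i)] [∀ i, Module R (N i)]
    -- the inverse system of transition maps `N j → N i` for `i ≤ j`
    (t : ∀ i j, i ≤ j → (N j →ₗ[R] N i))
    (ht_self : ∀ i (x : N i), t i i le_rfl x = x)
    (ht_comp : ∀ i j k (hij : i ≤ j) (hjk : j ≤ k) (x : N k),
      t i j hij (t j k hjk x) = t i k (hij.trans hjk) x)
    -- the transition maps are surjective
    (ht_surj : ∀ i j (h : i ≤ j), Function.Surjective (t i j h))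
    -- the cocone maps `Hom(N i, Q) → M ⊗ Q`
    (u : ∀ (Q : Type u) [AddCommGroup Q] [Module R Q] (i : ι),
      (N i →ₗ[R] Q) →ₗ[R] M ⊗[R] Q)
    -- compatibility with the transition maps
    (hcompat : ∀ (Q : Type u) [AddCommGroup Q] [Module R Q]
      (i j : ι) (h : i ≤ j) (φ : N i →ₗ[R] Q),
      u Q j (φ.comp (t i j h)) = u Q i φ)
    -- naturality in `Q`
    (hnat : ∀ (Q Q' : Type u) [AddCommGroup Q] [Module R Q]
      [AddCommGroup Q'] [Module R Q'] (g : Q →ₗ[R] Q') (i : ι) (φ : N i →ₗ[R] Q),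
      u Q' i (g.comp φ) = LinearMap.lTensor M g (u Q i φ))
    -- the induced map from the colimit is surjective …
    (hsurj : ∀ (Q : Type u) [AddCommGroup Q] [Module R Q] (x : M ⊗[R] Q),
      ∃ (i : ι) (φ : N i →ₗ[R] Q), u Q i φ = x)
    -- … and injective
    (hinj : ∀ (Q : Type u) [AddCommGroup Q] [Module R Q]
      (i j : ι) (φ : N i →ₗ[R] Q) (ψ : N j →ₗ[R] Q), u Q i φ = u Q j ψ →
      ∃ (k : ι) (hik : i ≤ k) (hjk : j ≤ k),
        φ.comp (t i k hik) = ψ.comp (t j k hjk)) :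
    Module.Flat R M ∧ IsMittagLeffler R M := by
  -- key: if a component dies after composing with a surjective transition map, it is zero
  have key : ∀ (Q : Type u) [AddCommGroup Q] [Module R Q] (i : ι) (φ : N i →ₗ[R] Q),
      u Q i φ = 0 → φ = 0 := by
    intro Q _ _ i φ h
    have h0 : u Q i (0 : N i →ₗ[R] Q) = 0 := map_zero _
    obtain ⟨k, hik, hik', hk⟩ := hinj Q i i φ 0 (h.trans h0.symm)
    ext x
    obtain ⟨y, rfl⟩ := ht_surj i k hik x
    simpa using congrArg (fun f => f y) hk
  constructor
  · rw [Module.Flat.iff_lTensor_injective']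
    intro I
    rw [injective_iff_map_eq_zero]
    intro x hx
    obtain ⟨i, φ, rfl⟩ := hsurj _ x
    rw [← hnat _ _ I.subtype i φ] at hx
    have hφ : I.subtype.comp φ = 0 := key _ i _ hx
    have : φ = 0 := by
      ext y
      simpa using congrArg (fun f => f y) hφ
    rw [this, map_zero]
  · intro κ Q _ _
    rw [injective_iff_map_eq_zero]
    intro x hx
    obtain ⟨i, φ, rfl⟩ := hsurj _ x
    have hcomp : ∀ k, TensorProduct.piRightHom R R M Q (u _ i φ) k
        = LinearMap.lTensor M (LinearMap.proj k) (u _ i φ) := by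
      intro k
      have : (LinearMap.proj k).comp ((TensorProduct.piRightHom R R M Q).restrictScalars R)
          = LinearMap.lTensor M (LinearMap.proj (R := R) (φ := Q) k) := by
        ext m q
        simp
      exact congrArg (fun f => f (u _ i φ)) this.symm ▸
        (congrArg (fun f : M ⊗[R] (∀ k, Q k) →ₗ[R] M ⊗[R] Q k => f (u _ i φ)) this)
    have hk0 : ∀ k, (LinearMap.proj k).comp φ = 0 := by
      intro k
      apply key
      rw [hnat _ _ (LinearMap.proj k) i φ, ← hcomp k, hx]
      rfl
    have : φ = 0 := by
      ext y k
      simpa using congrArg (fun f => f y) (hk0 k)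
    rw [this, map_zero]
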